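/- Let J = S \ {s_i : i ∈ I} and let w ∈ W^J with reduced expression w = s_{i_t} s_{i_{t-1}} ⋯ s_{i_1}. Then (i_1, i_2, …, i_t) is a valid firing sequence in the Modified Kostant Game with active set I: at each step λ (1 ≤ λ ≤ t), the vertex i_λ is sad in the configuration reached after firing i_1, …, i_{λ-1}. -/

import Mathlib

open scoped Classical RealInnerProductSpace

noncomputable section

variable {n d : ℕ}

/-- The pairing `⟨β, γ^∨⟩ = 2(β,γ)/(γ,γ)` of a vector with a coroot. -/
def rsPair (β γ : EuclideanSpace ℝ (Fin d)) : ℝ := 2 * ⟪β, γ⟫ / ⟪γ, γ⟫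

/-- The coroot `γ^∨ = 2γ/(γ,γ)`. -/
def rsCoroot (γ : EuclideanSpace ℝ (Fin d)) : EuclideanSpace ℝ (Fin d) :=
  (2 / ⟪γ, γ⟫) • γ

/-- `⟨·, γ^∨⟩` as a linear functional. -/
def corootForm (γ : EuclideanSpace ℝ (Fin d)) : EuclideanSpace ℝ (Fin d) →ₗ[ℝ] ℝ where
  toFun x := 2 * ⟪x, γ⟫ / ⟪γ, γ⟫
  map_add' x y := by simp only [inner_add_left]; ring
  map_smul' c x := by simp only [real_inner_smul_left, RingHom.id_apply, smul_eq_mul]; ring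

/-- A finite reduced crystallographic root system in the Euclidean space `ℝ^d`, together with a
chosen base of simple roots `α 0, …, α (n-1)`: every root is an integral linear combination of
the simple roots with all coefficients nonnegative or all nonpositive. -/
structure RootSystemBase (n d : ℕ) : Type where
  Φ : Finset (EuclideanSpace ℝ (Fin d))
  α : Fin n → EuclideanSpace ℝ (Fin d)
  α_mem : ∀ i, α i ∈ Φ
  nonzero : ∀ β ∈ Φ, β ≠ 0
  reduced : ∀ β ∈ Φ, ∀ t : ℝ, t • β ∈ Φ → t = 1 ∨ t = -1
  crystallographic : ∀ β ∈ Φ, ∀ γ ∈ Φ, ∃ k : ℤ, rsPair β γ = (k : ℝ)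
  reflClosed : ∀ β ∈ Φ, ∀ γ ∈ Φ, β - rsPair β γ • γ ∈ Φ
  indep : LinearIndependent ℝ α
  base : ∀ β ∈ Φ, ∃ c : Fin n → ℤ,
    β = ∑ i, (c i : ℝ) • α i ∧ ((∀ i, 0 ≤ c i) ∨ (∀ i, c i ≤ 0))

/-- The extended space `E' = E ⊕ ℝ^I`. -/
abbrev ExtSp (n d : ℕ) (I : Finset (Fin n)) : Type :=
  EuclideanSpace ℝ (Fin d) × ({p : Fin n // p ∈ I} → ℝ)

/-- The total source vector `β = ∑_{p ∈ I} β_p` in the extended space. -/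
def betaVec (n d : ℕ) (I : Finset (Fin n)) : ExtSp n d I := (0, fun _ => 1)

namespace RootSystemBase

variable (R : RootSystemBase n d)

lemma alpha_ne_zero (i : Fin n) : R.α i ≠ 0 := R.nonzero _ (R.α_mem i)

lemma inner_alpha_ne_zero (i : Fin n) : ⟪R.α i, R.α i⟫ ≠ 0 := fun h =>
  R.alpha_ne_zero i ((inner_self_eq_zero (𝕜 := ℝ)).mp h)

lemma corootForm_alpha_self (i : Fin n) : corootForm (R.α i) (R.α i) = 2 := by
  have h2 := R.inner_alpha_ne_zero i
  show 2 * ⟪R.α i, R.α i⟫ / ⟪R.α i, R.α i⟫ = 2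
  rw [mul_div_assoc, div_self h2, mul_one]

/-- The simple reflection `s_i : x ↦ x - ⟨x, α_i^∨⟩ α_i` as a linear automorphism of `E`. -/
def sRefl (i : Fin n) :
    EuclideanSpace ℝ (Fin d) ≃ₗ[ℝ] EuclideanSpace ℝ (Fin d) :=
  Module.reflection (R.corootForm_alpha_self i)

/-- The Weyl group `W`, as the subgroup of linear automorphisms of `E` generated by the
simple reflections. -/
def weyl : Subgroup (EuclideanSpace ℝ (Fin d) ≃ₗ[ℝ] EuclideanSpace ℝ (Fin d)) :=
  Subgroup.closure (Set.range R.sRefl)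

/-- `wordProd [i₁, …, i_t] = s_{i₁} ⋯ s_{i_t}`. -/
def wordProd (l : List (Fin n)) :
    EuclideanSpace ℝ (Fin d) ≃ₗ[ℝ] EuclideanSpace ℝ (Fin d) :=
  (l.map R.sRefl).prod

/-- The Weyl group element `s_{i_t} ⋯ s_{i_1}` associated to the firing sequence
`(i_1, …, i_t)`. -/
def seqProd (l : List (Fin n)) :
    EuclideanSpace ℝ (Fin d) ≃ₗ[ℝ] EuclideanSpace ℝ (Fin d) :=
  (l.reverse.map R.sRefl).prod

/-- The length function `ℓ` of the Coxeter system `(W, S)`: the minimal number of simple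
reflections needed to express `w`. -/
def len (w : EuclideanSpace ℝ (Fin d) ≃ₗ[ℝ] EuclideanSpace ℝ (Fin d)) : ℕ :=
  sInf {t | ∃ l : List (Fin n), l.length = t ∧ R.wordProd l = w}

/-- The set `W^J` of minimal length representatives of `W/W_J`, for `J = S \ {s_i : i ∈ I}`:
those `w ∈ W` with `ℓ(w s_j) > ℓ(w)` for all `j ∉ I`. -/
def minReps (I : Finset (Fin n)) :
    Set (EuclideanSpace ℝ (Fin d) ≃ₗ[ℝ] EuclideanSpace ℝ (Fin d)) :=
  {w | w ∈ R.weyl ∧ ∀ j, j ∉ I → R.len w < R.len (w * R.sRefl j)}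

/-- The Cartan matrix `a_{uv} = ⟨α_u, α_v^∨⟩` (an integer by crystallinity). -/
def cartan (u v : Fin n) : ℤ := ⌊rsPair (R.α u) (R.α v)⌋

/-- The set `Φ⁺` of positive roots. -/
def posRoots : Finset (EuclideanSpace ℝ (Fin d)) :=
  R.Φ.filter fun β => ∃ c : Fin n → ℤ, β = ∑ i, (c i : ℝ) • R.α i ∧ ∀ i, 0 ≤ c i

/-- The set `Φ_P⁺` of positive roots lying in the span of the simple roots `α_j`, `j ∈ P`. -/
def parPos (P : Finset (Fin n)) : Finset (EuclideanSpace ℝ (Fin d)) :=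
  R.posRoots.filter fun β => β ∈ Submodule.span ℝ (R.α '' (P : Set (Fin n)))

/-- `∑_{u ≠ v} (−a_{uv}) c_u + [v ∈ I]`. -/
def chipBound (I : Finset (Fin n)) (c : Fin n → ℤ) (v : Fin n) : ℤ :=
  (∑ u ∈ Finset.univ.erase v, -(R.cartan u v) * c u) + (if v ∈ I then 1 else 0)

/-- Vertex `v` is sad in the configuration `c` (Modified Kostant Game with active set `I`). -/
def Sad (I : Finset (Fin n)) (c : Fin n → ℤ) (v : Fin n) : Prop :=
  2 * c v < R.chipBound I c v

/-- Firing vertex `v`. -/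
def fire (I : Finset (Fin n)) (c : Fin n → ℤ) (v : Fin n) : Fin n → ℤ :=
  Function.update c v (R.chipBound I c v - c v)

end RootSystemBase

/-- `ValidFrom R I c l`: starting from the configuration `c`, the sequence `l` fires a sad
vertex at each step. -/
def RootSystemBase.ValidFrom (R : RootSystemBase n d) (I : Finset (Fin n)) :
    (Fin n → ℤ) → List (Fin n) → Prop
  | _, [] => True
  | c, v :: l => R.Sad I c v ∧ RootSystemBase.ValidFrom R I (R.fire I c v) l

namespace RootSystemBase

variable (R : RootSystemBase n d)

/-- A valid firing sequence: starts at the zero configuration and fires a sad vertex at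
each step. -/
def Valid (I : Finset (Fin n)) (l : List (Fin n)) : Prop := R.ValidFrom I 0 l

/-- The configuration reached after playing the sequence `l` from the zero configuration. -/
def play (I : Finset (Fin n)) (l : List (Fin n)) : Fin n → ℤ :=
  l.foldl (R.fire I) 0

/-- A maximal valid firing sequence: no vertex is sad in the final configuration. -/
def MaximalSeq (I : Finset (Fin n)) (l : List (Fin n)) : Prop :=
  R.Valid I l ∧ ∀ v, ¬ R.Sad I (R.play I l) v

/-- The (integer) coefficients of a vector in the basis of simple coroots, when they exist. -/
def corootCoeffs (x : EuclideanSpace ℝ (Fin d)) : Fin n → ℤ :=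
  if h : ∃ k : Fin n → ℤ, x = ∑ j, (k j : ℝ) • rsCoroot (R.α j) then h.choose else 0

/-- The `I`-height of a (co)vector: the sum over `j ∈ I` of its coefficients in the basis
of simple coroots. -/
def htI (I : Finset (Fin n)) (x : EuclideanSpace ℝ (Fin d)) : ℤ :=
  ∑ j ∈ I, R.corootCoeffs x j

end RootSystemBase

/-- The extended pairing `⟨·, α_i^∨⟩` on `E' = E ⊕ ℝ^I`, determined by
`⟨β_p, α_i^∨⟩ = −δ_{pi}`, as a linear functional. -/
def extForm (R : RootSystemBase n d) (I : Finset (Fin n)) (i : Fin n) :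
    ExtSp n d I →ₗ[ℝ] ℝ :=
  (corootForm (R.α i)).comp (LinearMap.fst ℝ _ _) -
    (if h : i ∈ I then
      (LinearMap.proj (R := ℝ) (φ := fun _ : {p : Fin n // p ∈ I} => ℝ) ⟨i, h⟩).comp
        (LinearMap.snd ℝ _ _)
    else 0)

namespace RootSystemBase

variable (R : RootSystemBase n d)

lemma extForm_apply (I : Finset (Fin n)) (i : Fin n) (x : ExtSp n d I) :
    extForm R I i x = corootForm (R.α i) x.1 - (if h : i ∈ I then x.2 ⟨i, h⟩ else 0) := by
  by_cases h : i ∈ I <;> simp [extForm, h]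

lemma extForm_alpha (I : Finset (Fin n)) (i : Fin n) :
    extForm R I i ((R.α i, 0) : ExtSp n d I) = 2 := by
  rw [R.extForm_apply]
  simp [R.corootForm_alpha_self i]

/-- The simple reflection `s_i : x ↦ x − ⟨x, α_i^∨⟩ α_i` on the extended space `E'`. -/
def extRefl (I : Finset (Fin n)) (i : Fin n) : ExtSp n d I ≃ₗ[ℝ] ExtSp n d I :=
  Module.reflection (R.extForm_alpha I i)

/-- The extended pairing `⟨x, α_i^∨⟩` for `x ∈ E'`. -/
def extPair (I : Finset (Fin n)) (x : ExtSp n d I) (i : Fin n) : ℝ := extForm R I i x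

/-- The action of `s_{i_t} ⋯ s_{i_1}` on the extended space `E'`. -/
def extSeqProd (I : Finset (Fin n)) (l : List (Fin n)) : ExtSp n d I ≃ₗ[ℝ] ExtSp n d I :=
  (l.reverse.map (R.extRefl I)).prod
set_option linter.dupNamespace false
set_option maxHeartbeats 1000000


lemma corootForm_apply' (γ x : EuclideanSpace ℝ (Fin d)) :
    corootForm γ x = 2 * ⟪x, γ⟫ / ⟪γ, γ⟫ := rfl


lemma sRefl_apply (i : Fin n) (x : EuclideanSpace ℝ (Fin d)) :
    R.sRefl i x = x - corootForm (R.α i) x • R.α i :=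
  Module.reflection_apply x (R.corootForm_alpha_self i)

lemma cartan_cast (u v : Fin n) :
    (R.cartan u v : ℝ) = corootForm (R.α v) (R.α u) := by
  obtain ⟨k, hk⟩ := R.crystallographic _ (R.α_mem u) _ (R.α_mem v)
  have h1 : R.cartan u v = k := by rw [cartan, hk, Int.floor_intCast]
  rw [h1, ← hk]; rfl

lemma cartan_self (v : Fin n) : R.cartan v v = 2 := by
  have := R.cartan_cast v v
  rw [R.corootForm_alpha_self] at this
  exact_mod_cast this

lemma inner_sRefl (i : Fin n) (x y : EuclideanSpace ℝ (Fin d)) :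
    ⟪R.sRefl i x, R.sRefl i y⟫ = ⟪x, y⟫ := by
  have h := R.inner_alpha_ne_zero i
  simp only [sRefl_apply, inner_sub_left, inner_sub_right,
    real_inner_smul_left, real_inner_smul_right, corootForm_apply']
  rw [real_inner_comm (R.α i) y]
  generalize ⟪x, y⟫ = A
  generalize ⟪x, R.α i⟫ = B
  generalize ⟪y, R.α i⟫ = C
  generalize hK : (⟪R.α i, R.α i⟫ : ℝ) = K at h
  field_simp
  ring

lemma sRefl_sRefl (i : Fin n) (x : EuclideanSpace ℝ (Fin d)) :
    R.sRefl i (R.sRefl i x) = x :=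
  Module.involutive_reflection (R.corootForm_alpha_self i) x

lemma sRefl_mul_self (i : Fin n) : R.sRefl i * R.sRefl i = 1 :=
  LinearEquiv.toLinearMap_injective (LinearMap.ext fun x => R.sRefl_sRefl i x)

lemma sRefl_inv (i : Fin n) : (R.sRefl i)⁻¹ = R.sRefl i :=
  inv_eq_of_mul_eq_one_right (R.sRefl_mul_self i)

lemma sRefl_alpha_self (i : Fin n) : R.sRefl i (R.α i) = -(R.α i) := by
  rw [sRefl_apply, R.corootForm_alpha_self, two_smul]
  abel

lemma sRefl_mem (i : Fin n) {β : EuclideanSpace ℝ (Fin d)} (h : β ∈ R.Φ) :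
    R.sRefl i β ∈ R.Φ := by
  rw [sRefl_apply]
  exact R.reflClosed β h _ (R.α_mem i)

lemma neg_mem {β : EuclideanSpace ℝ (Fin d)} (h : β ∈ R.Φ) : -β ∈ R.Φ := by
  have h2 : rsPair β β = 2 := by
    rw [rsPair, mul_div_assoc,
      div_self (fun hc => R.nonzero β h ((inner_self_eq_zero (𝕜 := ℝ)).mp hc)), mul_one]
  have := R.reflClosed β h β h
  rw [h2, two_smul] at this
  convert this using 1
  abel

/-! ### Words -/

lemma wordProd_nil : R.wordProd [] = 1 := rfl

lemma wordProd_cons (j : Fin n) (m : List (Fin n)) :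
    R.wordProd (j :: m) = R.sRefl j * R.wordProd m := by
  simp [wordProd]

lemma wordProd_cons_apply (j : Fin n) (m : List (Fin n)) (x : EuclideanSpace ℝ (Fin d)) :
    R.wordProd (j :: m) x = R.sRefl j (R.wordProd m x) := by
  rw [wordProd_cons]; rfl

lemma wordProd_append (a b : List (Fin n)) :
    R.wordProd (a ++ b) = R.wordProd a * R.wordProd b := by
  simp [wordProd]

lemma seqProd_eq_rev (l : List (Fin n)) : R.seqProd l = R.wordProd l.reverse := rfl

lemma seqProd_singleton (v : Fin n) : R.seqProd [v] = R.sRefl v := by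
  simp [seqProd_eq_rev, wordProd]

lemma seqProd_append (a b : List (Fin n)) :
    R.seqProd (a ++ b) = R.seqProd b * R.seqProd a := by
  simp [seqProd_eq_rev, wordProd_append]

lemma seqProd_concat (l : List (Fin n)) (v : Fin n) :
    R.seqProd (l ++ [v]) = R.sRefl v * R.seqProd l := by
  rw [seqProd_append, seqProd_singleton]

lemma wordProd_mem (m : List (Fin n)) {β : EuclideanSpace ℝ (Fin d)} (h : β ∈ R.Φ) :
    R.wordProd m β ∈ R.Φ := by
  induction m with
  | nil => exact h
  | cons j rest ih => rw [wordProd_cons_apply]; exact R.sRefl_mem j ih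

lemma inner_wordProd (m : List (Fin n)) (x y : EuclideanSpace ℝ (Fin d)) :
    ⟪R.wordProd m x, R.wordProd m y⟫ = ⟪x, y⟫ := by
  induction m with
  | nil => rfl
  | cons j rest ih => rw [wordProd_cons_apply, wordProd_cons_apply, inner_sRefl, ih]

lemma seqProd_eq_inv (m : List (Fin n)) : R.seqProd m = (R.wordProd m)⁻¹ := by
  induction m with
  | nil => simp [seqProd_eq_rev, wordProd_nil]
  | cons j rest ih =>
      have : R.seqProd (j :: rest) = R.seqProd rest * R.sRefl j := by
        have : (j :: rest) = [j] ++ rest := rfl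
        rw [this, seqProd_append, seqProd_singleton]
      rw [this, ih, wordProd_cons, mul_inv_rev, sRefl_inv]

lemma seqProd_inv (m : List (Fin n)) : (R.seqProd m)⁻¹ = R.wordProd m := by
  rw [seqProd_eq_inv, inv_inv]

lemma seqProd_mem (m : List (Fin n)) {β : EuclideanSpace ℝ (Fin d)} (h : β ∈ R.Φ) :
    R.seqProd m β ∈ R.Φ := R.wordProd_mem m.reverse h

/-! ### Dual functionals -/

/-- A family of linear functionals with `kappa p (α i) = δ_{p i}`. -/
def kappa (p : Fin n) : EuclideanSpace ℝ (Fin d) →ₗ[ℝ] ℝ :=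
  ((Module.Basis.span R.indep).coord p).comp
    ((Submodule.orthogonalProjection (Submodule.span ℝ (Set.range R.α))).toLinearMap)

lemma kappa_alpha (p i : Fin n) : R.kappa p (R.α i) = if p = i then 1 else 0 := by
  have hmem : R.α i ∈ Submodule.span ℝ (Set.range R.α) :=
    Submodule.subset_span ⟨i, rfl⟩
  have h1 : Submodule.orthogonalProjection (Submodule.span ℝ (Set.range R.α)) (R.α i)
      = ⟨R.α i, hmem⟩ := Submodule.orthogonalProjection_mem_subspace_eq_self ⟨R.α i, hmem⟩
  have h2 : (⟨R.α i, hmem⟩ : Submodule.span ℝ (Set.range R.α)) = Module.Basis.span R.indep i :=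
    (Module.Basis.span_apply R.indep i).symm
  have : R.kappa p (R.α i)
      = (Module.Basis.span R.indep).coord p (Module.Basis.span R.indep i) := by
    simp only [kappa, LinearMap.comp_apply, ContinuousLinearMap.coe_coe, h1, h2]
  rw [this, Module.Basis.coord_apply, Module.Basis.repr_self, Finsupp.single_apply]
  simp [eq_comm]

lemma kappa_sum (p : Fin n) (c : Fin n → ℝ) :
    R.kappa p (∑ i, c i • R.α i) = c p := by
  rw [map_sum]
  simp only [map_smul, kappa_alpha, smul_eq_mul, mul_ite, mul_one, mul_zero]
  simp [Finset.sum_ite_eq]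

/-! ### Positive roots -/

/-- `β` is a nonnegative integral combination of the simple roots. -/
def IsPos (β : EuclideanSpace ℝ (Fin d)) : Prop :=
  ∃ c : Fin n → ℤ, β = ∑ i, (c i : ℝ) • R.α i ∧ ∀ i, 0 ≤ c i

lemma kappa_nonneg {β : EuclideanSpace ℝ (Fin d)} (h : R.IsPos β) (p : Fin n) :
    0 ≤ R.kappa p β := by
  obtain ⟨c, hc, h0⟩ := h
  rw [hc, kappa_sum]
  exact_mod_cast h0 p

lemma isPos_alpha (i : Fin n) : R.IsPos (R.α i) := by
  refine ⟨fun j => if j = i then 1 else 0, ?_, fun j => by by_cases hji : j = i <;> simp [hji]⟩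
  rw [Finset.sum_eq_single i]
  · simp
  · intro b _ hb; simp [hb]
  · intro hi; exact absurd (Finset.mem_univ i) hi

lemma pos_or_neg {β : EuclideanSpace ℝ (Fin d)} (h : β ∈ R.Φ) :
    R.IsPos β ∨ R.IsPos (-β) := by
  obtain ⟨c, hc, hsign | hsign⟩ := R.base β h
  · exact Or.inl ⟨c, hc, hsign⟩
  · refine Or.inr ⟨-c, ?_, fun i => by simpa using hsign i⟩
    rw [hc, ← Finset.sum_neg_distrib]
    apply Finset.sum_congr rfl
    intro i _
    simp

lemma eq_zero_of_kappa {x : EuclideanSpace ℝ (Fin d)} (h : R.IsPos x)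
    (h0 : ∀ p, R.kappa p x = 0) : x = 0 := by
  obtain ⟨c, hc, _⟩ := h
  have hcz : ∀ p, (c p : ℝ) = 0 := by
    intro p
    have := h0 p
    rw [hc, kappa_sum] at this
    exact this
  rw [hc]
  apply Finset.sum_eq_zero
  intro i _
  rw [hcz i, zero_smul]

lemma eq_zero_of_pos_neg {β : EuclideanSpace ℝ (Fin d)} (h1 : R.IsPos β)
    (h2 : R.IsPos (-β)) : β = 0 := by
  apply R.eq_zero_of_kappa h1
  intro p
  have a1 := R.kappa_nonneg h1 p
  have a2 := R.kappa_nonneg h2 p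
  rw [map_neg] at a2
  linarith

lemma not_isPos_neg {β : EuclideanSpace ℝ (Fin d)} (h : β ∈ R.Φ) (hp : R.IsPos β) :
    ¬ R.IsPos (-β) := fun hn => R.nonzero β h (R.eq_zero_of_pos_neg hp hn)

/-- Simple reflections permute the positive roots other than the corresponding simple root. -/
lemma isPos_sRefl {β : EuclideanSpace ℝ (Fin d)} (v : Fin n) (hβ : β ∈ R.Φ)
    (hpos : R.IsPos β) (hne : β ≠ R.α v) : R.IsPos (R.sRefl v β) := by
  by_contra hneg
  have hmem : R.sRefl v β ∈ R.Φ := R.sRefl_mem v hβ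
  have h2 : R.IsPos (-(R.sRefl v β)) := (R.pos_or_neg hmem).resolve_left hneg
  obtain ⟨c, hc, hc0⟩ := hpos
  -- every coefficient of β away from v vanishes
  have hcz : ∀ p, p ≠ v → c p = 0 := by
    intro p hpv
    have hk2 := R.kappa_nonneg h2 p
    have hδ : R.kappa p (R.α v) = 0 := by
      rw [kappa_alpha]; simp [hpv]
    have hkβ : R.kappa p β = (c p : ℝ) := by rw [hc, kappa_sum]
    have hkr : R.kappa p (R.sRefl v β) = (c p : ℝ) := by
      rw [sRefl_apply, map_sub, map_smul, hδ, smul_zero, sub_zero, hkβ]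
    rw [map_neg, hkr] at hk2
    have hge : (0:ℝ) ≤ (c p : ℝ) := by exact_mod_cast hc0 p
    have : (c p : ℝ) = 0 := by linarith
    exact_mod_cast this
  have hβv : β = (c v : ℝ) • R.α v := by
    rw [hc, Finset.sum_eq_single v]
    · intro b _ hb; rw [hcz b hb]; simp
    · intro hv; exact absurd (Finset.mem_univ v) hv
  have := R.reduced (R.α v) (R.α_mem v) ((c v : ℝ)) (by rw [← hβv]; exact hβ)
  rcases this with h1 | h1
  · exact hne (by rw [hβv, h1, one_smul])
  · have hge : (0:ℝ) ≤ (c v : ℝ) := by exact_mod_cast hc0 v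
    rw [h1] at hge; linarith

/-! ### Exchange -/

lemma conj_sRefl (m : List (Fin n)) {a b : Fin n} (h : R.wordProd m (R.α a) = R.α b) :
    R.wordProd m * R.sRefl a = R.sRefl b * R.wordProd m := by
  apply LinearEquiv.toLinearMap_injective
  apply LinearMap.ext
  intro x
  show R.wordProd m (R.sRefl a x) = R.sRefl b (R.wordProd m x)
  have h1 : ⟪R.wordProd m x, R.α b⟫ = ⟪x, R.α a⟫ := by
    rw [← h, inner_wordProd]
  have h2 : (⟪R.α b, R.α b⟫ : ℝ) = ⟪R.α a, R.α a⟫ := by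
    rw [← h, inner_wordProd]
  have h3 : corootForm (R.α b) (R.wordProd m x) = corootForm (R.α a) x := by
    rw [corootForm_apply', corootForm_apply', h1, h2]
  rw [sRefl_apply, sRefl_apply, map_sub, map_smul, h, h3]

lemma exchange (m : List (Fin n)) (a : Fin n)
    (hneg : R.IsPos (-(R.wordProd m (R.α a)))) :
    ∃ m' : List (Fin n), m'.length + 1 = m.length ∧
      R.wordProd m' = R.wordProd m * R.sRefl a := by
  induction m with
  | nil =>
      exfalso
      exact R.not_isPos_neg (R.α_mem a) (R.isPos_alpha a) hneg
  | cons j rest ih =>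
      rw [wordProd_cons_apply] at hneg
      have hy : R.wordProd rest (R.α a) ∈ R.Φ := R.wordProd_mem rest (R.α_mem a)
      by_cases hp : R.IsPos (R.wordProd rest (R.α a))
      · have heq : R.wordProd rest (R.α a) = R.α j := by
          by_contra hne
          exact R.not_isPos_neg (R.sRefl_mem j hy) (R.isPos_sRefl j hy hp hne) hneg
        refine ⟨rest, by simp, ?_⟩
        have hconj := R.conj_sRefl rest heq
        rw [wordProd_cons, mul_assoc, hconj, ← mul_assoc, sRefl_mul_self, one_mul]
      · have hneg' : R.IsPos (-(R.wordProd rest (R.α a))) :=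
          (R.pos_or_neg hy).resolve_left hp
        obtain ⟨m'', hlen, hw⟩ := ih hneg'
        exact ⟨j :: m'', by simp [← hlen], by
          rw [wordProd_cons, wordProd_cons, hw, mul_assoc]⟩

/-! ### Length -/

lemma len_le {w : EuclideanSpace ℝ (Fin d) ≃ₗ[ℝ] EuclideanSpace ℝ (Fin d)}
    (m : List (Fin n)) (h : R.wordProd m = w) : R.len w ≤ m.length :=
  Nat.sInf_le ⟨m, rfl, h⟩

lemma len_le_seq {w : EuclideanSpace ℝ (Fin d) ≃ₗ[ℝ] EuclideanSpace ℝ (Fin d)}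
    (m : List (Fin n)) (h : R.seqProd m = w) : R.len w ≤ m.length := by
  have := R.len_le m.reverse (by rw [← seqProd_eq_rev, h])
  simpa using this

lemma exists_min_word {w : EuclideanSpace ℝ (Fin d) ≃ₗ[ℝ] EuclideanSpace ℝ (Fin d)}
    (m : List (Fin n)) (h : R.wordProd m = w) :
    ∃ m' : List (Fin n), m'.length = R.len w ∧ R.wordProd m' = w := by
  have hne : {t | ∃ l : List (Fin n), l.length = t ∧ R.wordProd l = w}.Nonempty :=
    ⟨m.length, m, rfl, h⟩
  exact Nat.sInf_mem hne

lemma isPos_apply_of_len_lt {w : EuclideanSpace ℝ (Fin d) ≃ₗ[ℝ] EuclideanSpace ℝ (Fin d)}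
    (m : List (Fin n)) (hw : R.wordProd m = w) (j : Fin n)
    (h : R.len w < R.len (w * R.sRefl j)) : R.IsPos (w (R.α j)) := by
  by_contra hp
  have hmem : w (R.α j) ∈ R.Φ := by rw [← hw]; exact R.wordProd_mem m (R.α_mem j)
  have hneg : R.IsPos (-(w (R.α j))) := (R.pos_or_neg hmem).resolve_left hp
  obtain ⟨m0, hm0len, hm0⟩ := R.exists_min_word m hw
  obtain ⟨m', hlen, hw'⟩ := R.exchange m0 j (by rwa [hm0])
  rw [hm0] at hw'
  have := R.len_le m' hw'
  omega

/-! ### Reduced words and positivity -/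

lemma seqProd_split (l₁ l₂ : List (Fin n)) (v : Fin n) :
    R.seqProd (l₁ ++ v :: l₂) = R.seqProd l₂ * R.sRefl v * R.seqProd l₁ := by
  have : l₁ ++ v :: l₂ = l₁ ++ ([v] ++ l₂) := rfl
  rw [this, seqProd_append, seqProd_append, seqProd_singleton, mul_assoc]

lemma reduced_split_pos {l₁ l₂ : List (Fin n)} {v : Fin n}
    (hred : R.len (R.seqProd (l₁ ++ v :: l₂)) = (l₁ ++ v :: l₂).length) :
    R.IsPos (R.wordProd l₁ (R.α v)) ∧ R.IsPos (R.seqProd l₂ (R.α v)) := by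
  set w := R.seqProd (l₁ ++ v :: l₂) with hwdef
  have hlen : (l₁ ++ v :: l₂).length = l₁.length + 1 + l₂.length := by
    simp; omega
  constructor
  · by_contra hp
    have hmem : R.wordProd l₁ (R.α v) ∈ R.Φ := R.wordProd_mem l₁ (R.α_mem v)
    have hneg : R.IsPos (-(R.wordProd l₁ (R.α v))) := (R.pos_or_neg hmem).resolve_left hp
    obtain ⟨m', hlen', hw'⟩ := R.exchange l₁ v hneg
    have h2 : R.sRefl v * R.seqProd l₁ = R.seqProd m' := by
      rw [R.seqProd_eq_inv m', hw', mul_inv_rev, R.sRefl_inv, ← R.seqProd_eq_inv]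
    have hkey : w = R.seqProd (m' ++ l₂) := by
      rw [hwdef, R.seqProd_split, mul_assoc, h2, ← R.seqProd_append]
    have hthis := R.len_le_seq _ hkey.symm
    rw [hred] at hthis
    simp only [List.length_append, List.length_cons] at hthis hlen'
    omega
  · by_contra hp
    have hmem : R.seqProd l₂ (R.α v) ∈ R.Φ := R.seqProd_mem l₂ (R.α_mem v)
    have hneg : R.IsPos (-(R.seqProd l₂ (R.α v))) := (R.pos_or_neg hmem).resolve_left hp
    obtain ⟨m', hlen', hw'⟩ := R.exchange l₂.reverse v (by rwa [← seqProd_eq_rev])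
    rw [← seqProd_eq_rev] at hw'
    have hkey : w = R.wordProd (m' ++ l₁.reverse) := by
      rw [hwdef, R.seqProd_split, R.wordProd_append, ← hw', ← R.seqProd_eq_rev]
    have hthis := R.len_le _ hkey.symm
    rw [hred] at hthis
    simp only [List.length_append, List.length_reverse, List.length_cons] at hthis hlen'
    omega


/-! ### The invariant linear form -/

/-- The form `K(x) = ∑_{p ∈ I} (|α_p|²/2) κ_p(x)`. -/
def KForm (I : Finset (Fin n)) : EuclideanSpace ℝ (Fin d) →ₗ[ℝ] ℝ :=
  ∑ p ∈ I, (⟪R.α p, R.α p⟫ / 2) • R.kappa p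

lemma KForm_apply (I : Finset (Fin n)) (x : EuclideanSpace ℝ (Fin d)) :
    R.KForm I x = ∑ p ∈ I, (⟪R.α p, R.α p⟫ / 2) * R.kappa p x := by
  simp [KForm]

lemma KForm_alpha (I : Finset (Fin n)) (v : Fin n) :
    R.KForm I (R.α v) = if v ∈ I then ⟪R.α v, R.α v⟫ / 2 else 0 := by
  rw [KForm_apply]
  simp only [kappa_alpha, mul_ite, mul_one, mul_zero]
  exact Finset.sum_ite_eq' I v _

lemma KForm_sRefl (I : Finset (Fin n)) (v : Fin n) (x : EuclideanSpace ℝ (Fin d)) :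
    R.KForm I (R.sRefl v x)
      = R.KForm I x - (if v ∈ I then (1:ℝ) else 0) * ⟪x, R.α v⟫ := by
  rw [sRefl_apply, map_sub, map_smul, smul_eq_mul, R.KForm_alpha I v, corootForm_apply']
  have hK := R.inner_alpha_ne_zero v
  split
  · rw [one_mul]
    have h2 : 2 * ⟪x, R.α v⟫ / ⟪R.α v, R.α v⟫ * (⟪R.α v, R.α v⟫ / 2) = ⟪x, R.α v⟫ := by
      generalize hB : (⟪x, R.α v⟫ : ℝ) = B
      generalize hKk : (⟪R.α v, R.α v⟫ : ℝ) = K at hK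
      field_simp
    rw [h2]
  · simp

lemma inner_alpha_sRefl (v : Fin n) (x : EuclideanSpace ℝ (Fin d)) :
    ⟪R.α v, R.sRefl v x⟫ = -⟪x, R.α v⟫ := by
  rw [sRefl_apply, inner_sub_right, real_inner_smul_right, corootForm_apply',
    real_inner_comm (R.α v) x]
  have hK := R.inner_alpha_ne_zero v
  generalize hB : (⟪x, R.α v⟫ : ℝ) = B
  generalize hKk : (⟪R.α v, R.α v⟫ : ℝ) = K at hK
  field_simp
  ring

/-! ### The vector tracking the configuration -/

/-- One step of the evolution `u ↦ s_v u + [v ∈ I] α_v`. -/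
def uStep (I : Finset (Fin n)) (u : EuclideanSpace ℝ (Fin d)) (v : Fin n) :
    EuclideanSpace ℝ (Fin d) :=
  R.sRefl v u + (if v ∈ I then (1:ℝ) else 0) • R.α v

/-- The vector whose simple-root coefficients give the configuration after playing `l`. -/
def uVec (I : Finset (Fin n)) (l : List (Fin n)) : EuclideanSpace ℝ (Fin d) :=
  l.foldl (R.uStep I) 0

lemma uVec_nil (I : Finset (Fin n)) : R.uVec I [] = 0 := rfl

lemma uVec_concat (I : Finset (Fin n)) (l : List (Fin n)) (v : Fin n) :
    R.uVec I (l ++ [v]) = R.uStep I (R.uVec I l) v := by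
  simp [uVec]

lemma seqProd_nil_apply (δ : EuclideanSpace ℝ (Fin d)) : R.seqProd [] δ = δ := rfl

lemma invariance (I : Finset (Fin n)) (l : List (Fin n)) (δ : EuclideanSpace ℝ (Fin d)) :
    ⟪R.uVec I l, R.seqProd l δ⟫ - R.KForm I (R.seqProd l δ) = -(R.KForm I δ) := by
  induction l using List.reverseRecOn with
  | nil =>
      rw [R.seqProd_nil_apply, R.uVec_nil, inner_zero_left]
      ring
  | append_singleton l v ih =>
      rw [R.uVec_concat, R.seqProd_concat]
      have happ : (R.sRefl v * R.seqProd l) δ = R.sRefl v (R.seqProd l δ) := rfl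
      rw [happ]
      show ⟪R.sRefl v (R.uVec I l) + (if v ∈ I then (1:ℝ) else 0) • R.α v, _⟫ - _ = _
      rw [inner_add_left, real_inner_smul_left, R.inner_sRefl, R.inner_alpha_sRefl,
        R.KForm_sRefl]
      linarith [ih]

lemma seqProd_apply_wordProd (l : List (Fin n)) (x : EuclideanSpace ℝ (Fin d)) :
    R.seqProd l (R.wordProd l x) = x := by
  have h : R.seqProd l * R.wordProd l = 1 := by
    rw [seqProd_eq_inv]; exact inv_mul_cancel _
  calc R.seqProd l (R.wordProd l x) = (R.seqProd l * R.wordProd l) x := rfl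
    _ = x := by rw [h]; rfl

lemma key_value (I : Finset (Fin n)) (l₁ : List (Fin n)) (v : Fin n) :
    (if v ∈ I then (1:ℝ) else 0) - corootForm (R.α v) (R.uVec I l₁)
      = (2 / ⟪R.α v, R.α v⟫) * R.KForm I (R.wordProd l₁ (R.α v)) := by
  have hinv := R.invariance I l₁ (R.wordProd l₁ (R.α v))
  rw [R.seqProd_apply_wordProd, R.KForm_alpha] at hinv
  rw [corootForm_apply']
  have hK := R.inner_alpha_ne_zero v
  by_cases hv : v ∈ I <;> simp only [hv, if_true, if_false] at hinv ⊢
  · generalize hA : (⟪R.uVec I l₁, R.α v⟫ : ℝ) = A at hinv ⊢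
    generalize hG : (R.KForm I (R.wordProd l₁ (R.α v)) : ℝ) = G at hinv ⊢
    generalize hKk : (⟪R.α v, R.α v⟫ : ℝ) = K at hinv hK ⊢
    field_simp
    linarith
  · rw [sub_zero] at hinv
    rw [hinv]
    ring

/-! ### The game -/

lemma chipBound_sub (I : Finset (Fin n)) (c : Fin n → ℤ) (v : Fin n) :
    R.chipBound I c v - 2 * c v
      = (if v ∈ I then 1 else 0) - ∑ u, R.cartan u v * c u := by
  have h : ∑ u, R.cartan u v * c u
      = R.cartan v v * c v + ∑ u ∈ Finset.univ.erase v, R.cartan u v * c u :=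
    (Finset.add_sum_erase _ _ (Finset.mem_univ v)).symm
  have h2 : ∑ u ∈ Finset.univ.erase v, -R.cartan u v * c u
      = -∑ u ∈ Finset.univ.erase v, R.cartan u v * c u := by
    rw [← Finset.sum_neg_distrib]
    apply Finset.sum_congr rfl
    intro u _
    ring
  rw [chipBound, h, R.cartan_self, h2]
  ring

lemma play_nil (I : Finset (Fin n)) : R.play I [] = 0 := rfl

lemma play_concat (I : Finset (Fin n)) (l : List (Fin n)) (v : Fin n) :
    R.play I (l ++ [v]) = R.fire I (R.play I l) v := by
  simp [play]

lemma play_sum (I : Finset (Fin n)) (l : List (Fin n)) :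
    ∑ u, ((R.play I l u : ℝ)) • R.α u = R.uVec I l := by
  induction l using List.reverseRecOn with
  | nil =>
      rw [R.play_nil, R.uVec_nil]
      simp
  | append_singleton l v ih =>
      rw [R.play_concat, R.uVec_concat, ← ih]
      set c := R.play I l with hc
      have hq : corootForm (R.α v) (∑ u, ((c u : ℝ)) • R.α u)
          = ((∑ u, R.cartan u v * c u : ℤ) : ℝ) := by
        rw [map_sum]
        push_cast
        apply Finset.sum_congr rfl
        intro u _
        rw [map_smul, smul_eq_mul, ← R.cartan_cast]
        push_cast
        ring
      have hite : ((if v ∈ I then (1:ℤ) else 0 : ℤ) : ℝ) = (if v ∈ I then (1:ℝ) else 0) := by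
        split <;> simp
      have hcoeff : ((R.fire I c v v : ℤ) : ℝ)
          = (c v : ℝ) - corootForm (R.α v) (∑ u, ((c u : ℝ)) • R.α u)
            + (if v ∈ I then (1:ℝ) else 0) := by
        have hfv : R.fire I c v v = R.chipBound I c v - c v := by
          rw [fire, Function.update_self]
        have hcb := R.chipBound_sub I c v
        have : R.fire I c v v = (c v) + ((if v ∈ I then 1 else 0) - ∑ u, R.cartan u v * c u) := by
          omega
        rw [this, hq]
        push_cast
        ring
      have hsplit : ∀ (g : Fin n → ℝ), ∑ u, g u • R.α u
          = ∑ u ∈ Finset.univ.erase v, g u • R.α u + g v • R.α v :=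
        fun g => (Finset.sum_erase_add _ _ (Finset.mem_univ v)).symm
      rw [hsplit (fun u => ((R.fire I c v u : ℤ) : ℝ)), hsplit (fun u => ((c u : ℤ) : ℝ))]
      have herase : ∑ u ∈ Finset.univ.erase v, ((R.fire I c v u : ℤ) : ℝ) • R.α u
          = ∑ u ∈ Finset.univ.erase v, ((c u : ℤ) : ℝ) • R.α u := by
        apply Finset.sum_congr rfl
        intro u hu
        have : R.fire I c v u = c u := by
          rw [fire, Function.update_of_ne (Finset.ne_of_mem_erase hu)]
        rw [this]
      rw [herase, hcoeff]
      show _ = R.sRefl v _ + _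
      rw [sRefl_apply]
      rw [hsplit (fun u => ((c u : ℤ) : ℝ))]
      module

lemma sad_step (I : Finset (Fin n)) {l₁ l₂ : List (Fin n)} {v : Fin n}
    (hred : R.len (R.seqProd (l₁ ++ v :: l₂)) = (l₁ ++ v :: l₂).length)
    (hmin : R.seqProd (l₁ ++ v :: l₂) ∈ R.minReps I) :
    R.Sad I (R.play I l₁) v := by
  set w := R.seqProd (l₁ ++ v :: l₂) with hw
  obtain ⟨hpos1, hpos2⟩ := R.reduced_split_pos hred
  set γ := R.wordProd l₁ (R.α v) with hγ
  have hγΦ : γ ∈ R.Φ := R.wordProd_mem l₁ (R.α_mem v)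
  have hwγ : w γ = -(R.seqProd l₂ (R.α v)) := by
    rw [hw, R.seqProd_split]
    show R.seqProd l₂ (R.sRefl v (R.seqProd l₁ γ)) = _
    rw [hγ, R.seqProd_apply_wordProd, R.sRefl_alpha_self, map_neg]
  have hIc : ∃ p ∈ I, R.kappa p γ ≠ 0 := by
    by_contra hno
    push_neg at hno
    obtain ⟨c, hcγ, hc0⟩ := hpos1
    have hpw : ∀ i, c i ≠ 0 → R.IsPos (w (R.α i)) := by
      intro i hci
      have hiI : i ∉ I := by
        intro hiI
        apply hci
        have h3 := hno i hiI
        rw [hcγ, kappa_sum] at h3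
        exact_mod_cast h3
      exact R.isPos_apply_of_len_lt (l₁ ++ v :: l₂).reverse
        (by rw [hw, R.seqProd_eq_rev]) i (hmin.2 i hiI)
    have hge : ∀ p, 0 ≤ R.kappa p (w γ) := by
      intro p
      have hexp : w γ = ∑ i, (c i : ℝ) • (w (R.α i)) := by
        rw [hγ] at hcγ
        rw [hγ, hcγ, map_sum]
        simp [map_smul]
      rw [hexp, map_sum]
      apply Finset.sum_nonneg
      intro i _
      rw [map_smul, smul_eq_mul]
      by_cases hci : c i = 0
      · simp [hci]
      · have h1 : (0:ℝ) ≤ (c i : ℝ) := by exact_mod_cast hc0 i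
        exact mul_nonneg h1 (R.kappa_nonneg (hpw i hci) p)
    have hS0 : R.seqProd l₂ (R.α v) = 0 := by
      apply R.eq_zero_of_kappa hpos2
      intro p
      have h1 := hge p
      rw [hwγ, map_neg] at h1
      have h2 := R.kappa_nonneg hpos2 p
      linarith
    exact R.nonzero _ (R.seqProd_mem l₂ (R.α_mem v)) hS0
  have hKpos : 0 < R.KForm I γ := by
    rw [KForm_apply]
    obtain ⟨p0, hp0I, hp0⟩ := hIc
    apply Finset.sum_pos'
    · intro p _
      have h6 : (0:ℝ) ≤ ⟪R.α p, R.α p⟫ := real_inner_self_nonneg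
      exact mul_nonneg (by linarith) (R.kappa_nonneg hpos1 p)
    · refine ⟨p0, hp0I, mul_pos ?_ ?_⟩
      · have h7 : (0:ℝ) < ⟪R.α p0, R.α p0⟫ :=
          lt_of_le_of_ne real_inner_self_nonneg (Ne.symm (R.inner_alpha_ne_zero p0))
        linarith
      · exact lt_of_le_of_ne (R.kappa_nonneg hpos1 p0) (Ne.symm hp0)
  have hval := R.key_value I l₁ v
  have hpos' : 0 < (2 / ⟪R.α v, R.α v⟫) * R.KForm I γ := by
    apply mul_pos
    · exact div_pos two_pos
        (lt_of_le_of_ne real_inner_self_nonneg (Ne.symm (R.inner_alpha_ne_zero v)))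
    · exact hKpos
  have hreal : 0 < (if v ∈ I then (1:ℝ) else 0) - corootForm (R.α v) (R.uVec I l₁) := by
    rw [hval]
    exact hpos'
  rw [← R.play_sum I l₁] at hreal
  have hq : corootForm (R.α v) (∑ u, ((R.play I l₁ u : ℝ)) • R.α u)
      = ((∑ u, R.cartan u v * R.play I l₁ u : ℤ) : ℝ) := by
    rw [map_sum]
    push_cast
    apply Finset.sum_congr rfl
    intro u _
    rw [map_smul, smul_eq_mul, ← R.cartan_cast]
    push_cast
    ring
  rw [hq] at hreal
  have hite : ((if v ∈ I then (1:ℤ) else 0 : ℤ) : ℝ) = (if v ∈ I then (1:ℝ) else 0) := by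
    split <;> simp
  have hint : 0 < (if v ∈ I then (1:ℤ) else 0) - ∑ u, R.cartan u v * R.play I l₁ u := by
    have h5 : (0:ℝ) < ((if v ∈ I then (1:ℤ) else 0 : ℤ) : ℝ)
        - ((∑ u, R.cartan u v * R.play I l₁ u : ℤ) : ℝ) := by
      rw [hite]
      exact hreal
    exact_mod_cast h5
  have hcb := R.chipBound_sub I (R.play I l₁) v
  rw [Sad]
  omega

end RootSystemBase

/-- If `w ∈ W^J` (for `J = S \\ {s_i : i ∈ I}`) has reduced expression
`s_{i_t} ⋯ s_{i_1}`, then `(i_1, …, i_t)` is a valid firing sequence of the Modified Kostant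
Game with active set `I`: at each step the fired vertex is sad. -/
theorem statement1 {n d : ℕ} (R : RootSystemBase n d) (I : Finset (Fin n))
    (l : List (Fin n))
    (hred : R.len (R.seqProd l) = l.length)
    (hmin : R.seqProd l ∈ R.minReps I) :
    R.Valid I l := by
  have main : ∀ l₂ l₁ : List (Fin n), l₁ ++ l₂ = l → R.ValidFrom I (R.play I l₁) l₂ := by
    intro l₂
    induction l₂ with
    | nil => intro l₁ _; trivial
    | cons v rest ih =>
        intro l₁ hsplit
        subst hsplit
        refine ⟨R.sad_step I hred hmin, ?_⟩
        have h2 := ih (l₁ ++ [v]) (by simp)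
        rwa [R.play_concat] at h2
  exact main l [] rfl
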